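/- Let G be a triangle-free finite simple graph of diameter 3 with a cut vertex x. Then G - x has exactly one nontrivial component. -/

import Mathlib

open SimpleGraph

/-- A walk in `G` whose support lies in `s` gives reachability in the induced graph. -/
lemma reachable_induce_of_walk {V : Type*} {G : SimpleGraph V} {s : Set V} :
    ∀ {u v : V} (w : G.Walk u v) (_ : ∀ y ∈ w.support, y ∈ s) (hu : u ∈ s) (hv : v ∈ s),
      (G.induce s).Reachable ⟨u, hu⟩ ⟨v, hv⟩ := by
  intro u v w
  induction w with
  | nil => intro _ hu hv; rfl
  | @cons a b c h p ih =>
      intro hs ha hc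
      have hb : b ∈ s := hs b (by simp [SimpleGraph.Walk.support_cons])
      have hadj : (G.induce s).Adj ⟨a, ha⟩ ⟨b, hb⟩ := by simpa using h
      exact hadj.reachable.trans
        (ih (fun y hy => hs y (by simp [SimpleGraph.Walk.support_cons, hy])) hb hc)

/-- A triangle-free graph of diameter 3 with a cut vertex `x` has
exactly one nontrivial (edge-containing) component after deleting `x`. -/
theorem stmt5 {V : Type*} [Fintype V] (G : SimpleGraph V)
    (htf : G.CliqueFree 3) (hdiam : G.diam = 3) (x : V)
    (hcut : ¬ (G.induce ({x}ᶜ : Set V)).Connected) :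
    ∃! c : (G.induce ({x}ᶜ : Set V)).ConnectedComponent,
      ∃ a b : ({x}ᶜ : Set V), (G.induce ({x}ᶜ : Set V)).Adj a b ∧
        (G.induce ({x}ᶜ : Set V)).connectedComponentMk a = c := by
  classical
  set D := G.induce ({x}ᶜ : Set V) with hD
  have hne : Nonempty V := ⟨x⟩
  have hdne : G.diam ≠ 0 := by omega
  have hetop : G.ediam ≠ ⊤ := SimpleGraph.ediam_ne_top_of_diam_ne_zero hdne
  have hconn : G.Connected := by
    rw [SimpleGraph.connected_iff]
    refine ⟨fun u v => ?_, hne⟩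
    exact SimpleGraph.reachable_of_edist_ne_top
      (fun h => hetop (top_le_iff.mp (h ▸ SimpleGraph.edist_le_ediam)))
  have hdist3 : ∀ u v : V, G.dist u v ≤ 3 := fun u v =>
    hdiam ▸ SimpleGraph.dist_le_diam hetop
  have hnex : ∀ u : ({x}ᶜ : Set V), (u : V) ≠ x := fun u => u.2
  -- Step 1: D has an edge
  have hedge : ∃ a b : ({x}ᶜ : Set V), D.Adj a b := by
    by_contra hno
    push_neg at hno
    have hadjx : ∀ v : V, v ≠ x → G.Adj v x := by
      intro v hv
      obtain ⟨w⟩ := hconn v x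
      cases w with
      | nil => exact absurd rfl hv
      | @cons _ b _ h p =>
        by_cases hb : b = x
        · exact hb ▸ h
        · exact absurd (by simpa [hD] using h : D.Adj ⟨v, hv⟩ ⟨b, hb⟩) (hno _ _)
    obtain ⟨p, q, hpq⟩ := SimpleGraph.exists_dist_eq_diam (G := G)
    rw [hdiam] at hpq
    have hpqne : p ≠ q := by
      intro h; rw [h, SimpleGraph.dist_self] at hpq; omega
    by_cases hp : p = x
    · subst hp
      have : G.dist p q = 1 := SimpleGraph.dist_eq_one_iff_adj.mpr
        ((hadjx q (fun h => hpqne h.symm)).symm)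
      omega
    · by_cases hq : q = x
      · subst hq
        have : G.dist p q = 1 := SimpleGraph.dist_eq_one_iff_adj.mpr (hadjx p hp)
        omega
      · have hle := SimpleGraph.dist_le (SimpleGraph.Walk.cons (hadjx p hp)
          (SimpleGraph.Walk.cons (hadjx q hq).symm SimpleGraph.Walk.nil))
        simp only [SimpleGraph.Walk.length_cons, SimpleGraph.Walk.length_nil] at hle
        omega
  obtain ⟨a, b, hab⟩ := hedge
  -- key: vertices not adjacent to x are D-reachable from each other
  have key : ∀ (u v : ({x}ᶜ : Set V)), ¬ G.Adj x ↑u → ¬ G.Adj x ↑v →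
      D.Reachable u v := by
    intro u v hxu hxv
    by_contra hnr
    have hdu : 2 ≤ G.dist (u : V) x := by
      have h0 : 0 < G.dist (u : V) x := hconn.pos_dist_of_ne (hnex u)
      have h1 : G.dist (u : V) x ≠ 1 := fun h =>
        hxu (SimpleGraph.dist_eq_one_iff_adj.mp h).symm
      omega
    have hdv : 2 ≤ G.dist x (v : V) := by
      have h0 : 0 < G.dist x (v : V) := hconn.pos_dist_of_ne fun h => hnex v h.symm
      have h1 : G.dist x (v : V) ≠ 1 := fun h =>
        hxv (SimpleGraph.dist_eq_one_iff_adj.mp h)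
      omega
    obtain ⟨w, hw⟩ := hconn.exists_walk_length_eq_dist (u : V) (v : V)
    have hx : x ∈ w.support := by
      by_contra hxs
      have hsup : ∀ y ∈ w.support, y ∈ ({x}ᶜ : Set V) := fun y hy => by
        simp only [Set.mem_compl_iff, Set.mem_singleton_iff]
        exact fun h => hxs (h ▸ hy)
      exact hnr (by simpa using reachable_induce_of_walk w hsup u.2 v.2)
    have hsplit : (w.takeUntil x hx).length + (w.dropUntil x hx).length = w.length := by
      conv_rhs => rw [← SimpleGraph.Walk.take_spec w hx]
      rw [SimpleGraph.Walk.length_append]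
    have ht := SimpleGraph.dist_le (w.takeUntil x hx)
    have hd := SimpleGraph.dist_le (w.dropUntil x hx)
    have := hdist3 (u : V) (v : V)
    omega
  -- pick a non-x-neighbor endpoint of an edge, in the same component
  have pick : ∀ (p q : ({x}ᶜ : Set V)), D.Adj p q →
      ∃ u : ({x}ᶜ : Set V), ¬ G.Adj x ↑u ∧
        D.connectedComponentMk u = D.connectedComponentMk p := by
    intro p q hpq
    have hGpq : G.Adj ↑p ↑q := hpq
    by_cases hxp : G.Adj x ↑p
    · by_cases hxq : G.Adj x ↑q
      · exact absurd (SimpleGraph.is3Clique_triple_iff.mpr ⟨hxp, hxq, hGpq⟩) (htf _)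
      · exact ⟨q, hxq, (SimpleGraph.ConnectedComponent.connectedComponentMk_eq_of_adj hpq).symm⟩
    · exact ⟨p, hxp, rfl⟩
  refine ⟨D.connectedComponentMk a, ⟨a, b, hab, rfl⟩, ?_⟩
  rintro y ⟨a', b', hab', rfl⟩
  obtain ⟨u, hxu, hu⟩ := pick a b hab
  obtain ⟨v, hxv, hv⟩ := pick a' b' hab'
  have hr : D.Reachable v u := key v u hxv hxu
  calc D.connectedComponentMk a' = D.connectedComponentMk v := hv.symm
    _ = D.connectedComponentMk u := (SimpleGraph.ConnectedComponent.sound hr)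
    _ = D.connectedComponentMk a := hu
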